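/- Let x : ℕ → ℤ be a CL trajectory with gcd(x 0, x 1) = 1 which is periodic, i.e., there exists p > 0 with x(n+p) = x n for all n. Then either x n = 1 for all n, or x n = −1 for all n, or x(n+6) = x n for all n and (x 0, x 1, x 2, x 3, x 4, x 5) is a cyclic rotation of (−2, 1, 3, 2, −1, −3). -/

import Mathlib

/-- A CL trajectory: `x (n+2) = (x n + x (n+1)) / 2` when `x n + x (n+1)` is even,
and `x (n+2) = x (n+1) - x n` when it is odd. -/
def IsCLTrajectory (x : ℕ → ℤ) : Prop :=
  ∀ n : ℕ,
    (Even (x n + x (n + 1)) → x (n + 2) = (x n + x (n + 1)) / 2) ∧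
    (Odd (x n + x (n + 1)) → x (n + 2) = x (n + 1) - x n)

namespace CLAux

variable {x : ℕ → ℤ}

/-- both-odd ("good") position -/
def Good (x : ℕ → ℤ) (n : ℕ) : Prop := Odd (x n) ∧ Odd (x (n+1))

/-- pair max -/
noncomputable def mx (x : ℕ → ℤ) (n : ℕ) : ℤ := max |x n| |x (n+1)|

lemma estep (hx : IsCLTrajectory x) (m : ℕ) (k : ℤ) (h : x m + x (m+1) = 2*k) :
    x (m+2) = k := by
  have := (hx m).1 ⟨k, by omega⟩
  rw [h] at this
  simpa [Int.mul_ediv_cancel_left k (two_ne_zero)] using this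

lemma ostep (hx : IsCLTrajectory x) (m : ℕ) (k : ℤ) (h : x m + x (m+1) = 2*k+1) :
    x (m+2) = x (m+1) - x m :=
  (hx m).2 ⟨k, by omega⟩

lemma evsum (hx : IsCLTrajectory x) {n : ℕ} (hg : Good x n) :
    x n + x (n+1) = 2 * x (n+2) := by
  obtain ⟨⟨a, ha⟩, ⟨b, hb⟩⟩ := hg
  have h : x n + x (n+1) = 2 * (a + b + 1) := by omega
  rw [estep hx n (a+b+1) h]; exact h

lemma gcd_all (hx : IsCLTrajectory x) (hgcd : Int.gcd (x 0) (x 1) = 1) :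
    ∀ n, Int.gcd (x n) (x (n+1)) = 1 := by
  intro n
  induction n with
  | zero => exact hgcd
  | succ n ih =>
      have h1 : (↑(Int.gcd (x (n+1)) (x (n+2))) : ℤ) ∣ x (n+1) := Int.gcd_dvd_left _ _
      have h2 : (↑(Int.gcd (x (n+1)) (x (n+2))) : ℤ) ∣ x (n+2) := Int.gcd_dvd_right _ _
      have h0 : (↑(Int.gcd (x (n+1)) (x (n+2))) : ℤ) ∣ x n := by
        rcases Int.even_or_odd (x n + x (n+1)) with he | ho
        · obtain ⟨k, hk⟩ := he
          have hs : x n + x (n+1) = 2 * k := by omega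
          have := estep hx n k hs
          have : x n = 2 * x (n+2) - x (n+1) := by omega
          rw [this]
          exact dvd_sub (Dvd.dvd.mul_left h2 2) h1
        · have := (hx n).2 ho
          have : x n = x (n+1) - x (n+2) := by omega
          rw [this]
          exact dvd_sub h1 h2
      have hdvd : (↑(Int.gcd (x (n+1)) (x (n+2))) : ℤ) ∣ (↑(Int.gcd (x n) (x (n+1))) : ℤ) :=
        Int.dvd_coe_gcd h0 h1
      rw [ih] at hdvd
      have : Int.gcd (x (n+1)) (x (n+2)) ∣ 1 := by exact_mod_cast hdvd
      exact Nat.dvd_one.mp this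

lemma not_both_even (hx : IsCLTrajectory x) (hgcd : Int.gcd (x 0) (x 1) = 1)
    (n : ℕ) : ¬ (Even (x n) ∧ Even (x (n+1))) := by
  rintro ⟨⟨a, ha⟩, ⟨b, hb⟩⟩
  have h1 : (2:ℤ) ∣ x n := ⟨a, by omega⟩
  have h2 : (2:ℤ) ∣ x (n+1) := ⟨b, by omega⟩
  have := Int.dvd_gcd h1 h2
  rw [gcd_all hx hgcd n] at this
  norm_num at this

lemma good012 (hx : IsCLTrajectory x) (hgcd : Int.gcd (x 0) (x 1) = 1) :
    Good x 0 ∨ Good x 1 ∨ Good x 2 := by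
  rcases Int.even_or_odd (x 0) with h0 | h0 <;> rcases Int.even_or_odd (x 1) with h1 | h1
  · exact absurd ⟨h0, h1⟩ (not_both_even hx hgcd 0)
  · -- x0 even, x1 odd : x2 = x1 - x0 odd, Good 1
    right; left
    have h2 : x 2 = x 1 - x 0 := (hx 0).2 (Even.add_odd h0 h1)
    exact ⟨h1, by rw [h2]; exact h1.sub_even h0⟩
  · -- x0 odd, x1 even
    right; right
    have h2 : x 2 = x 1 - x 0 := (hx 0).2 (Odd.add_even h0 h1)
    have h2o : Odd (x 2) := by rw [h2]; exact h1.sub_odd h0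
    have h3 : x 3 = x 2 - x 1 := (hx 1).2 (h1.add_odd h2o)
    exact ⟨h2o, by rw [h3]; exact h2o.sub_even h1⟩
  · exact Or.inl ⟨h0, h1⟩


lemma br2 (hx : IsCLTrajectory x) {n : ℕ} (hg : Good x n) (he : Even (x (n+2))) :
    2 * x (n+3) = x n - x (n+1) ∧ x (n+4) = - x (n+1) ∧ Good x (n+3) := by
  obtain ⟨h0o, h1o⟩ := hg
  have hs : x n + x (n+1) = 2 * x (n+2) := evsum hx ⟨h0o, h1o⟩
  have h3 : x (n+3) = x (n+2) - x (n+1) := (hx (n+1)).2 (h1o.add_even he)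
  have h3o : Odd (x (n+3)) := by rw [h3]; exact he.sub_odd h1o
  have h4 : x (n+4) = x (n+3) - x (n+2) := (hx (n+2)).2 (he.add_odd h3o)
  refine ⟨by omega, by omega, h3o, ?_⟩
  have : x (n+4) = - x (n+1) := by omega
  rw [show n+3+1 = n+4 from rfl, this]
  exact h1o.neg

lemma mx_br1 (hx : IsCLTrajectory x) {n : ℕ} (hg : Good x n) (ho : Odd (x (n+2))) :
    Good x (n+1) ∧ mx x (n+1) ≤ mx x n := by
  have hs : x n + x (n+1) = 2 * x (n+2) := evsum hx hg
  refine ⟨⟨hg.2, ho⟩, ?_⟩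
  have h1 : |x n + x (n+1)| ≤ |x n| + |x (n+1)| := abs_add_le _ _
  have h2 : |x n + x (n+1)| = 2 * |x (n+2)| := by rw [hs, abs_mul]; norm_num
  have ha : |x n| ≤ mx x n := le_max_left _ _
  have hb : |x (n+1)| ≤ mx x n := le_max_right _ _
  have hc : |x (n+2)| ≤ mx x n := by linarith
  exact max_le hb hc

lemma mx_br2 (hx : IsCLTrajectory x) {n : ℕ} (hg : Good x n) (he : Even (x (n+2))) :
    ¬ Good x (n+1) ∧ ¬ Good x (n+2) ∧ Good x (n+3) ∧ mx x (n+3) ≤ mx x n := by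
  obtain ⟨hd, hneg, hg3⟩ := br2 hx hg he
  have hne : ¬ Odd (x (n+2)) := by rwa [Int.not_odd_iff_even]
  refine ⟨fun h => hne h.2, fun h => hne h.1, hg3, ?_⟩
  have h1 : |x n - x (n+1)| ≤ |x n| + |x (n+1)| := by
    calc |x n - x (n+1)| = |x n + -(x (n+1))| := by ring_nf
    _ ≤ |x n| + |-(x (n+1))| := abs_add_le _ _
    _ = |x n| + |x (n+1)| := by rw [abs_neg]
  have h2 : |x n - x (n+1)| = 2 * |x (n+3)| := by rw [← hd, abs_mul]; norm_num
  have ha : |x n| ≤ mx x n := le_max_left _ _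
  have hb : |x (n+1)| ≤ mx x n := le_max_right _ _
  have hc : |x (n+3)| ≤ mx x n := by linarith
  have hd4 : |x (n+3+1)| ≤ mx x n := by
    rw [show n+3+1 = n+4 from rfl, hneg, abs_neg]; exact hb
  exact max_le hc hd4

lemma mx_mono (hx : IsCLTrajectory x) :
    ∀ k n, Good x n → Good x (n+k) → mx x (n+k) ≤ mx x n := by
  intro k
  induction k using Nat.strong_induction_on with
  | _ k ih =>
    intro n hgn hgk
    rcases Nat.eq_zero_or_pos k with hk0 | hkpos
    · subst hk0; exact le_of_eq rfl
    rcases Int.even_or_odd (x (n+2)) with he | ho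
    · obtain ⟨hn1, hn2, hg3, hle⟩ := mx_br2 hx hgn he
      have hk3 : 3 ≤ k := by
        by_contra hc
        have : k = 1 ∨ k = 2 := by omega
        rcases this with h | h <;> subst h
        · exact hn1 hgk
        · exact hn2 hgk
      have hidx : n + 3 + (k-3) = n + k := by omega
      have := ih (k-3) (by omega) (n+3) hg3 (by rw [hidx]; exact hgk)
      rw [hidx] at this
      exact le_trans this hle
    · obtain ⟨hg1, hle⟩ := mx_br1 hx hgn ho
      have hidx : n + 1 + (k-1) = n + k := by omega
      have := ih (k-1) (by omega) (n+1) hg1 (by rw [hidx]; exact hgk)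
      rw [hidx] at this
      exact le_trans this hle

section Periodic

variable {p : ℕ}

lemma perk (hper : ∀ n, x (n+p) = x n) : ∀ j n, x (n + j*p) = x n := by
  intro j
  induction j with
  | zero => intro n; simp
  | succ j ih =>
      intro n
      have h : n + (j+1)*p = (n + j*p) + p := by ring
      rw [h, hper, ih]

lemma good_shift (hper : ∀ n, x (n+p) = x n) (j n : ℕ) (hg : Good x n) :
    Good x (n + j*p) := by
  obtain ⟨h0, h1⟩ := hg
  constructor
  · rw [perk hper]; exact h0
  · rw [show n + j*p + 1 = (n+1) + j*p by ring, perk hper]; exact h1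

lemma mx_shift (hper : ∀ n, x (n+p) = x n) (j n : ℕ) :
    mx x (n + j*p) = mx x n := by
  unfold mx
  rw [perk hper, show n + j*p + 1 = (n+1) + j*p by ring, perk hper]

lemma mx_eq (hx : IsCLTrajectory x) (hp : 0 < p) (hper : ∀ n, x (n+p) = x n)
    {m n : ℕ} (hm : Good x m) (hn : Good x n) : mx x m = mx x n := by
  -- symmetric statement; prove assuming m ≤ n then use both directions
  have key : ∀ a b : ℕ, Good x a → Good x b → a ≤ b → mx x b ≤ mx x a := by
    intro a b ha hb hab
    have := mx_mono hx (b - a) a ha (by rwa [show a + (b-a) = b by omega])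
    rwa [show a + (b-a) = b by omega] at this
  rcases le_total m n with h | h
  · refine le_antisymm ?_ (key m n hm hn h)
    -- mx m ≤ mx n : go from n to m + n*p
    have h1 : m ≤ m + n*p := Nat.le_add_right _ _
    have h2 : n ≤ m + n*p := by
      have : n ≤ n * p := Nat.le_mul_of_pos_right n hp
      omega
    have := key n (m + n*p) hn (good_shift hper n m hm) h2
    rwa [mx_shift hper n m] at this
  · refine le_antisymm (key n m hn hm h) ?_
    have h2 : m ≤ n + m*p := by
      have : m ≤ m * p := Nat.le_mul_of_pos_right m hp
      omega
    have := key m (n + m*p) hm (good_shift hper m n hn) h2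
    rwa [mx_shift hper m n] at this

end Periodic


lemma odd_abs' {a : ℤ} (h : Odd a) : Odd |a| := by
  rcases abs_choice a with h' | h' <;> rw [h']
  · exact h
  · exact h.neg

lemma mx_odd {n : ℕ} (hg : Good x n) : Odd (mx x n) := by
  rcases max_choice |x n| |x (n+1)| with h | h <;> rw [mx, h]
  · exact odd_abs' hg.1
  · exact odd_abs' hg.2

/-- the key exclusion: at a good position with pair-max ≥ 3, the step must be "even type". -/
lemma no_branch1 (hx : IsCLTrajectory x) (hg1 : ∀ n, Int.gcd (x n) (x (n+1)) = 1)
    {p : ℕ} (hp : 0 < p) (hper : ∀ n, x (n+p) = x n)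
    {n : ℕ} (hg : Good x n) (h3 : 3 ≤ mx x n) : Even (x (n+2)) := by
  by_contra hne
  have ho : Odd (x (n+2)) := Int.not_even_iff_odd.mp hne
  obtain ⟨hg1', hle1⟩ := mx_br1 hx hg ho
  set M := mx x n with hM
  have hs : x n + x (n+1) = 2 * x (n+2) := evsum hx hg
  have hmx1 : mx x (n+1) = M := mx_eq hx hp hper hg1' hg
  have ha : |x n| ≤ M := le_max_left _ _
  have hb : |x (n+1)| ≤ M := le_max_right _ _
  have habs := abs_le.mp ha
  have hbbs := abs_le.mp hb
  -- |x (n+2)| < M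
  have hcM : |x (n+2)| < M := by
    rcases lt_or_ge (|x (n+2)|) M with h | h
    · exact h
    exfalso
    have hc' : |x (n+2)| ≤ M := by
      have := le_max_right |x (n+1)| |x (n+2)|
      rw [show max |x (n+1)| |x (n+2)| = mx x (n+1) from rfl, hmx1] at this
      exact this
    have hceq : |x (n+2)| = M := le_antisymm hc' h
    have hcc := abs_eq (by linarith : (0:ℤ) ≤ M) |>.mp hceq
    -- then x n = x (n+1)
    have heq : x n = x (n+1) := by rcases hcc with h' | h' <;> omega
    have := hg1 n
    rw [← heq, Int.gcd_self] at this
    have hx1 : x n = 1 ∨ x n = -1 := Int.natAbs_eq_iff.mp this |>.imp (by simp) (by simp)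
    rcases hx1 with h' | h' <;> rw [h'] at habs <;> omega
  -- |x (n+1)| = M
  have hbM : |x (n+1)| = M := by
    rcases max_choice |x (n+1)| |x (n+2)| with h | h
    · rw [show max |x (n+1)| |x (n+2)| = mx x (n+1) from rfl, hmx1] at h; exact h.symm
    · exfalso
      rw [show max |x (n+1)| |x (n+2)| = mx x (n+1) from rfl, hmx1] at h
      omega
  rcases Int.even_or_odd (x (n+3)) with he3 | ho3
  · -- branch2 at n+1 : next good pair is at n+4, both coords small
    obtain ⟨hd, hneg, hg4⟩ := br2 hx hg1' (by rwa [show n+1+2 = n+3 from rfl])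
    rw [show n+1+3 = n+4 from rfl] at hg4 hd
    rw [show n+1+4 = n+5 from rfl, show n+1+1 = n+2 from rfl] at hneg
    rw [show n+1+1 = n+2 from rfl] at hd
    have hmx4 : mx x (n+4) = M := mx_eq hx hp hper hg4 hg
    have h1 : |x (n+1) - x (n+2)| ≤ |x (n+1)| + |x (n+2)| := by
      calc |x (n+1) - x (n+2)| = |x (n+1) + -(x (n+2))| := by ring_nf
      _ ≤ |x (n+1)| + |-(x (n+2))| := abs_add_le _ _
      _ = |x (n+1)| + |x (n+2)| := by rw [abs_neg]
    have h2 : |x (n+1) - x (n+2)| = 2 * |x (n+4)| := by rw [← hd, abs_mul]; norm_num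
    have h4 : |x (n+4)| < M := by omega
    have h5 : |x (n+4+1)| < M := by
      rw [show n+4+1 = n+5 from rfl, hneg, abs_neg]; exact hcM
    have : mx x (n+4) < M := max_lt h4 h5
    omega
  · -- branch1 at n+1 : good at n+2, forces x(n+1) = x(n+2)
    have hg2 : Good x (n+2) := ⟨ho, ho3⟩
    have hmx2 : mx x (n+2) = M := mx_eq hx hp hper hg2 hg
    have hs2 : x (n+1) + x (n+2) = 2 * x (n+3) := by
      have := evsum hx hg1'
      rwa [show n+1+1 = n+2 from rfl, show n+1+2 = n+3 from rfl] at this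
    have hdM : |x (n+3)| = M := by
      rcases max_choice |x (n+2)| |x (n+3)| with h | h <;>
        rw [show max |x (n+2)| |x (n+3)| = mx x (n+2) from rfl, hmx2] at h
      · omega
      · exact h.symm
    have hdd := abs_eq (by linarith : (0:ℤ) ≤ M) |>.mp hdM
    have hbb := abs_eq (by linarith : (0:ℤ) ≤ M) |>.mp hbM
    have hcbs := abs_le.mp (le_of_lt hcM)
    have heq : x (n+1) = x (n+2) := by rcases hdd with h' | h' <;> rcases hbb with h'' | h'' <;> omega
    have := hg1 (n+1)
    rw [show n+1+1 = n+2 from rfl, ← heq, Int.gcd_self] at this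
    have hx1 : x (n+1) = 1 ∨ x (n+1) = -1 := Int.natAbs_eq_iff.mp this |>.imp (by simp) (by simp)
    rcases hx1 with h' | h' <;> rw [h'] at hbM <;> simp at hbM <;> omega

/-- the halving quantity -/
def u (x : ℕ → ℤ) (n : ℕ) : ℤ := 3 * x n - x (n+1)

lemma ustep (hx : IsCLTrajectory x) {n : ℕ} (hg : Good x n) (he : Even (x (n+2))) :
    2 * u x (n+3) = u x n := by
  obtain ⟨hd, hneg, _⟩ := br2 hx hg he
  unfold u
  rw [show n+3+1 = n+4 from rfl, hneg]
  omega

lemma uchain (hx : IsCLTrajectory x) (hB2 : ∀ m, Good x m → Even (x (m+2))) :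
    ∀ k n, Good x n → Good x (n+k) → 0 < k → 2 * |u x (n+k)| ≤ |u x n| := by
  intro k
  induction k using Nat.strong_induction_on with
  | _ k ih =>
    intro n hgn hgk hkpos
    have he := hB2 n hgn
    obtain ⟨hn1, hn2, hg3, _⟩ := mx_br2 hx hgn he
    have hu : 2 * u x (n+3) = u x n := ustep hx hgn he
    have habs : |u x n| = 2 * |u x (n+3)| := by rw [← hu, abs_mul]; norm_num
    have hk3 : 3 ≤ k := by
      by_contra hc
      have : k = 1 ∨ k = 2 := by omega
      rcases this with h | h <;> subst h
      · exact hn1 hgk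
      · exact hn2 hgk
    rcases eq_or_lt_of_le hk3 with h3 | h3
    · rw [← h3] at hgk ⊢; omega
    · have hidx : n + 3 + (k-3) = n + k := by omega
      have := ih (k-3) (by omega) (n+3) hg3 (by rw [hidx]; exact hgk) (by omega)
      rw [hidx] at this
      have h0 : 0 ≤ |u x (n+k)| := abs_nonneg _
      have h1 : 0 ≤ |u x (n+3)| := abs_nonneg _
      omega

lemma uzero (hx : IsCLTrajectory x) (hB2 : ∀ m, Good x m → Even (x (m+2)))
    {p : ℕ} (hp : 0 < p) (hper : ∀ n, x (n+p) = x n)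
    {n : ℕ} (hg : Good x n) : u x n = 0 := by
  have hgp : Good x (n + 1*p) := good_shift hper 1 n hg
  have h := uchain hx hB2 (1*p) n hg hgp (by omega)
  have hup : u x (n + 1*p) = u x n := by
    unfold u
    rw [perk hper, show n + 1*p + 1 = (n+1) + 1*p by ring, perk hper]
  rw [hup] at h
  have := abs_nonneg (u x n)
  have : |u x n| = 0 := by omega
  exact abs_eq_zero.mp this


lemma all_const (hx : IsCLTrajectory x) {m : ℕ} {c : ℤ}
    (h0 : x m = c) (h1 : x (m+1) = c) : ∀ k, x (m+k) = c := by
  have key : ∀ k, x (m+k) = c ∧ x (m+k+1) = c := by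
    intro k
    induction k with
    | zero => exact ⟨h0, h1⟩
    | succ k ih =>
        obtain ⟨ha, hb⟩ := ih
        have h2 : x (m+k+2) = c := estep hx (m+k) c (by rw [ha, hb]; ring)
        exact ⟨by rwa [show m+(k+1) = m+k+1 by ring], by rwa [show m+(k+1)+1 = m+k+2 by ring]⟩
  exact fun k => (key k).1

/-- the six consecutive values after a (1,3) good pair -/
lemma from13 (hx : IsCLTrajectory x) {m : ℕ} (h0 : x m = 1) (h1 : x (m+1) = 3) :
    x (m+2) = 2 ∧ x (m+3) = -1 ∧ x (m+4) = -3 ∧ x (m+5) = -2 ∧ x (m+6) = 1 ∧ x (m+7) = 3 := by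
  have h2 : x (m+2) = 2 := estep hx m 2 (by rw [h0, h1]; norm_num)
  have h3 : x (m+3) = -1 := by
    have := ostep hx (m+1) 2 (by rw [show m+1+1 = m+2 from rfl, h1, h2]; norm_num)
    rw [show m+1+2 = m+3 from rfl, show m+1+1 = m+2 from rfl, h1, h2] at this
    linarith
  have h4 : x (m+4) = -3 := by
    have := ostep hx (m+2) 0 (by rw [show m+2+1 = m+3 from rfl, h2, h3]; norm_num)
    rw [show m+2+2 = m+4 from rfl, show m+2+1 = m+3 from rfl, h2, h3] at this
    linarith
  have h5 : x (m+5) = -2 := by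
    have := estep hx (m+3) (-2) (by rw [show m+3+1 = m+4 from rfl, h3, h4]; norm_num)
    rwa [show m+3+2 = m+5 from rfl] at this
  have h6 : x (m+6) = 1 := by
    have := ostep hx (m+4) (-3) (by rw [show m+4+1 = m+5 from rfl, h4, h5]; norm_num)
    rw [show m+4+2 = m+6 from rfl, show m+4+1 = m+5 from rfl, h4, h5] at this
    linarith
  have h7 : x (m+7) = 3 := by
    have := ostep hx (m+5) (-1) (by rw [show m+5+1 = m+6 from rfl, h5, h6]; norm_num)
    rw [show m+5+2 = m+7 from rfl, show m+5+1 = m+6 from rfl, h5, h6] at this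
    linarith
  exact ⟨h2, h3, h4, h5, h6, h7⟩

/-- from a (-1,-3) good pair, three steps later we get a (1,3) good pair -/
lemma fromneg (hx : IsCLTrajectory x) {m : ℕ} (h0 : x m = -1) (h1 : x (m+1) = -3) :
    x (m+3) = 1 ∧ x (m+4) = 3 := by
  have h2 : x (m+2) = -2 := estep hx m (-2) (by rw [h0, h1]; norm_num)
  have h3 : x (m+3) = 1 := by
    have := ostep hx (m+1) (-3) (by rw [show m+1+1 = m+2 from rfl, h1, h2]; norm_num)
    rw [show m+1+2 = m+3 from rfl, show m+1+1 = m+2 from rfl, h1, h2] at this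
    linarith
  have h4 : x (m+4) = 3 := by
    have := ostep hx (m+2) (-1) (by rw [show m+2+1 = m+3 from rfl, h2, h3]; norm_num)
    rw [show m+2+2 = m+4 from rfl, show m+2+1 = m+3 from rfl, h2, h3] at this
    linarith
  exact ⟨h3, h4⟩

/-- the 6-cycle as a function of the residue -/
def C6 : ℕ → ℤ := fun r =>
  if r = 0 then 1 else if r = 1 then 3 else if r = 2 then 2
  else if r = 3 then -1 else if r = 4 then -3 else -2

lemma xval (hx : IsCLTrajectory x) {m₀ : ℕ} (h0 : x m₀ = 1) (h1 : x (m₀+1) = 3) :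
    ∀ j, x (m₀ + j) = C6 (j % 6) := by
  have base : ∀ k, x (m₀ + 6*k) = 1 ∧ x (m₀ + 6*k + 1) = 3 := by
    intro k
    induction k with
    | zero => simpa using ⟨h0, h1⟩
    | succ k ih =>
        obtain ⟨ha, hb⟩ := ih
        obtain ⟨_, _, _, _, h6, h7⟩ := from13 hx ha hb
        constructor
        · rwa [show m₀ + 6*(k+1) = m₀ + 6*k + 6 by ring]
        · rwa [show m₀ + 6*(k+1) + 1 = m₀ + 6*k + 7 by ring]
  intro j
  obtain ⟨ha, hb⟩ := base (j / 6)
  obtain ⟨h2, h3, h4, h5, _, _⟩ := from13 hx ha hb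
  have hr : j % 6 < 6 := Nat.mod_lt _ (by norm_num)
  have hj : j = 6 * (j / 6) + j % 6 := (Nat.div_add_mod j 6).symm
  have : j % 6 = 0 ∨ j % 6 = 1 ∨ j % 6 = 2 ∨ j % 6 = 3 ∨ j % 6 = 4 ∨ j % 6 = 5 := by omega
  rcases this with h | h | h | h | h | h <;> rw [h] <;> unfold C6 <;> norm_num
  · rwa [show m₀ + j = m₀ + 6*(j/6) by omega]
  · rwa [show m₀ + j = m₀ + 6*(j/6) + 1 by omega]
  · rwa [show m₀ + j = m₀ + 6*(j/6) + 2 by omega]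
  · rwa [show m₀ + j = m₀ + 6*(j/6) + 3 by omega]
  · rwa [show m₀ + j = m₀ + 6*(j/6) + 4 by omega]
  · rwa [show m₀ + j = m₀ + 6*(j/6) + 5 by omega]

lemma veq : ∀ a : Fin 6, ![(-2 : ℤ), 1, 3, 2, -1, -3] a = C6 ((a.val + 5) % 6) := by decide

end CLAux

theorem cl_periodic_classification (x : ℕ → ℤ) (hx : IsCLTrajectory x)
    (hgcd : Int.gcd (x 0) (x 1) = 1)
    (hper : ∃ p : ℕ, 0 < p ∧ ∀ n : ℕ, x (n + p) = x n) :
    (∀ n : ℕ, x n = 1) ∨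
    (∀ n : ℕ, x n = -1) ∨
    ((∀ n : ℕ, x (n + 6) = x n) ∧
      ∃ r : Fin 6, ∀ i : Fin 6,
        x (i : ℕ) = ![(-2 : ℤ), 1, 3, 2, -1, -3] (i + r)) := by
  obtain ⟨p, hp, hper⟩ := hper
  have hg1 := CLAux.gcd_all hx hgcd
  obtain ⟨n₀, hgn₀⟩ : ∃ n₀, CLAux.Good x n₀ := by
    rcases CLAux.good012 hx hgcd with h | h | h
    exacts [⟨0, h⟩, ⟨1, h⟩, ⟨2, h⟩]
  have hModd := CLAux.mx_odd hgn₀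
  have hMnn : (0:ℤ) ≤ CLAux.mx x n₀ := le_trans (abs_nonneg _) (le_max_left _ _)
  have hMcase : CLAux.mx x n₀ = 1 ∨ 3 ≤ CLAux.mx x n₀ := by
    obtain ⟨k, hk⟩ := hModd
    omega
  have hperk := CLAux.perk (x := x) (p := p) hper
  rcases hMcase with hM1 | hM3
  · -- small case : values ±1
    have ha : |x n₀| ≤ 1 := by rw [← hM1]; exact le_max_left _ _
    have hb : |x (n₀+1)| ≤ 1 := by rw [← hM1]; exact le_max_right _ _
    have ha' := abs_le.mp ha
    have hb' := abs_le.mp hb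
    obtain ⟨a0, ha0⟩ := hgn₀.1
    obtain ⟨b0, hb0⟩ := hgn₀.2
    have hxa : x n₀ = 1 ∨ x n₀ = -1 := by omega
    have hxb : x (n₀+1) = 1 ∨ x (n₀+1) = -1 := by omega
    have habs : ∀ c : ℤ, (c = 1 ∨ c = -1) → x n₀ = c → x (n₀+1) = c → ∀ n, x n = c := by
      intro c hc h0 h1 n
      have hall := CLAux.all_const hx h0 h1
      have hle : n₀ ≤ n₀ * p := Nat.le_mul_of_pos_right n₀ hp
      calc x n = x (n + n₀ * p) := (hperk n₀ n).symm
      _ = c := by rw [show n + n₀*p = n₀ + (n + n₀*p - n₀) by omega]; exact hall _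
    rcases hxa with h0 | h0 <;> rcases hxb with h1 | h1
    · exact Or.inl (habs 1 (Or.inl rfl) h0 h1)
    · -- (1,-1) : impossible
      exfalso
      have h2 : x (n₀+2) = 0 := CLAux.estep hx n₀ 0 (by rw [h0, h1]; ring)
      have h3 : x (n₀+3) = 1 := by
        have := CLAux.ostep hx (n₀+1) (-1)
          (by rw [show n₀+1+1 = n₀+2 from rfl, h1, h2]; ring)
        rw [show n₀+1+2 = n₀+3 from rfl, show n₀+1+1 = n₀+2 from rfl, h1, h2] at this
        linarith
      have h4 : x (n₀+4) = 1 := by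
        have := CLAux.ostep hx (n₀+2) 0
          (by rw [show n₀+2+1 = n₀+3 from rfl, h2, h3]; ring)
        rw [show n₀+2+2 = n₀+4 from rfl, show n₀+2+1 = n₀+3 from rfl, h2, h3] at this
        linarith
      have hall := CLAux.all_const hx h3 (by rwa [show n₀+3+1 = n₀+4 from rfl])
      have : x (n₀+1) = 1 := by
        calc x (n₀+1) = x ((n₀+1) + 2*p) := (hperk 2 (n₀+1)).symm
        _ = 1 := by rw [show (n₀+1) + 2*p = (n₀+3) + (2*p - 2) by omega]; exact hall _
      omega
    · -- (-1,1) : impossible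
      exfalso
      have h2 : x (n₀+2) = 0 := CLAux.estep hx n₀ 0 (by rw [h0, h1]; ring)
      have h3 : x (n₀+3) = -1 := by
        have := CLAux.ostep hx (n₀+1) 0
          (by rw [show n₀+1+1 = n₀+2 from rfl, h1, h2]; ring)
        rw [show n₀+1+2 = n₀+3 from rfl, show n₀+1+1 = n₀+2 from rfl, h1, h2] at this
        linarith
      have h4 : x (n₀+4) = -1 := by
        have := CLAux.ostep hx (n₀+2) (-1)
          (by rw [show n₀+2+1 = n₀+3 from rfl, h2, h3]; ring)
        rw [show n₀+2+2 = n₀+4 from rfl, show n₀+2+1 = n₀+3 from rfl, h2, h3] at this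
        linarith
      have hall := CLAux.all_const hx h3 (by rwa [show n₀+3+1 = n₀+4 from rfl])
      have : x (n₀+1) = -1 := by
        calc x (n₀+1) = x ((n₀+1) + 2*p) := (hperk 2 (n₀+1)).symm
        _ = -1 := by rw [show (n₀+1) + 2*p = (n₀+3) + (2*p - 2) by omega]; exact hall _
      omega
    · exact Or.inr (Or.inl (habs (-1) (Or.inr rfl) h0 h1))
  · -- big case : the 6-cycle
    have hB2 : ∀ m, CLAux.Good x m → Even (x (m+2)) := by
      intro m hm
      exact CLAux.no_branch1 hx hg1 hp hper hm
        (by rw [CLAux.mx_eq hx hp hper hm hgn₀]; exact hM3)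
    have hu := CLAux.uzero hx hB2 hp hper hgn₀
    unfold CLAux.u at hu
    have hdvd : x n₀ ∣ x (n₀+1) := ⟨3, by linarith⟩
    have hone : x n₀ ∣ (1:ℤ) := by
      have h := Int.dvd_coe_gcd (dvd_refl (x n₀)) hdvd
      rw [hg1 n₀] at h
      exact_mod_cast h
    have hx1 : x n₀ = 1 ∨ x n₀ = -1 := Int.isUnit_iff.mp (isUnit_of_dvd_one hone)
    obtain ⟨m₀, h0, h1⟩ : ∃ m₀, x m₀ = 1 ∧ x (m₀+1) = 3 := by
      rcases hx1 with h | h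
      · exact ⟨n₀, h, by omega⟩
      · have h1' : x (n₀+1) = -3 := by omega
        obtain ⟨ha, hb⟩ := CLAux.fromneg hx h h1'
        exact ⟨n₀+3, ha, by rwa [show n₀+3+1 = n₀+4 from rfl]⟩
    right; right
    have hxval := CLAux.xval hx h0 h1
    have hjle : m₀ + 1 ≤ (m₀+1) * p := Nat.le_mul_of_pos_right _ hp
    refine ⟨?_, ?_⟩
    · intro n
      calc x (n+6) = x ((n+6) + (m₀+1)*p) := (hperk (m₀+1) (n+6)).symm
      _ = x (m₀ + (n + (m₀+1)*p - m₀ + 6)) := by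
          rw [show (n+6) + (m₀+1)*p = m₀ + (n + (m₀+1)*p - m₀ + 6) by omega]
      _ = CLAux.C6 ((n + (m₀+1)*p - m₀ + 6) % 6) := hxval _
      _ = CLAux.C6 ((n + (m₀+1)*p - m₀) % 6) := by
          rw [show (n + (m₀+1)*p - m₀ + 6) % 6 = (n + (m₀+1)*p - m₀) % 6 by omega]
      _ = x (m₀ + (n + (m₀+1)*p - m₀)) := (hxval _).symm
      _ = x (n + (m₀+1)*p) := by rw [show m₀ + (n + (m₀+1)*p - m₀) = n + (m₀+1)*p by omega]
      _ = x n := hperk (m₀+1) n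
    · set D := (m₀+1)*p - m₀ with hD
      have hDpos : m₀ + D = (m₀+1)*p := by omega
      refine ⟨⟨(D+1) % 6, Nat.mod_lt _ (by norm_num)⟩, fun i => ?_⟩
      have hiv : x (i : ℕ) = CLAux.C6 (((i:ℕ) + D) % 6) := by
        calc x (i:ℕ) = x ((i:ℕ) + (m₀+1)*p) := (hperk (m₀+1) _).symm
        _ = x (m₀ + ((i:ℕ) + D)) := by
            rw [show (i:ℕ) + (m₀+1)*p = m₀ + ((i:ℕ) + D) by omega]
        _ = CLAux.C6 (((i:ℕ) + D) % 6) := hxval _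
      rw [CLAux.veq, Fin.val_add, hiv]
      have hrv : (⟨(D+1) % 6, Nat.mod_lt _ (by norm_num)⟩ : Fin 6).val = (D+1) % 6 := rfl
      rw [hrv]
      congr 1
      omega
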